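/- Fix a nonzero r in F_2^k and a multiset G of vectors from F_2^k. The maximum number of pairwise disjoint recovery sets for r of size at most 2 inside G equals N_G(r) + (1/2)·Σ_{e ∈ F_2^k \ {0, r}} min(N_G(e), N_G(r − e)), where N_G(e) is the multiplicity of e in G. -/

import Mathlib

namespace MaxRecoveryAux

open Multiset

variable {k : ℕ}

noncomputable def ord (k : ℕ) : (Fin k → ZMod 2) → Fin (Fintype.card (Fin k → ZMod 2)) :=
  Fintype.equivFin _

lemma ord_inj : Function.Injective (ord k) := (Fintype.equivFin _).injective

lemma add_self (e : Fin k → ZMod 2) : e + e = 0 := by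
  funext j; exact CharTwo.add_self_eq_zero _

lemma ne_sub {r : Fin k → ZMod 2} (hr : r ≠ 0) (e : Fin k → ZMod 2) : e ≠ r - e := by
  intro h
  apply hr
  have : e + e = r := eq_sub_iff_add_eq.mp h
  rw [add_self] at this; exact this.symm

noncomputable def reps (r : Fin k → ZMod 2) : Finset (Fin k → ZMod 2) :=
  Finset.univ.filter (fun e => e ≠ 0 ∧ e ≠ r ∧ ord k e < ord k (r - e))

lemma mem_reps {r e : Fin k → ZMod 2} :
    e ∈ reps r ↔ e ≠ 0 ∧ e ≠ r ∧ ord k e < ord k (r - e) := by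
  simp [reps]

lemma half_sum {r : Fin k → ZMod 2} (hr : r ≠ 0) (c : (Fin k → ZMod 2) → ℕ) :
    (∑ e ∈ Finset.univ.filter (fun e : Fin k → ZMod 2 => e ≠ 0 ∧ e ≠ r),
      min (c e) (c (r - e))) = 2 * ∑ e ∈ reps r, min (c e) (c (r - e)) := by
  classical
  rw [← Finset.sum_filter_add_sum_filter_not _ (fun e => ord k e < ord k (r - e))]
  have h1 : (Finset.univ.filter (fun e : Fin k → ZMod 2 => e ≠ 0 ∧ e ≠ r)).filter
      (fun e => ord k e < ord k (r - e)) = reps r := by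
    ext e; simp [reps, and_assoc]
  have h2 : ∑ e ∈ (Finset.univ.filter (fun e : Fin k → ZMod 2 => e ≠ 0 ∧ e ≠ r)).filter
      (fun e => ¬ ord k e < ord k (r - e)), min (c e) (c (r - e))
      = ∑ e ∈ reps r, min (c e) (c (r - e)) := by
    apply Finset.sum_nbij' (i := fun e => r - e) (j := fun e => r - e)
    · intro e he
      simp only [Finset.mem_filter, Finset.mem_univ, true_and] at he
      obtain ⟨⟨h0, hrne⟩, hord⟩ := he
      rw [mem_reps]
      refine ⟨?_, ?_, ?_⟩
      · intro h; apply hrne; rw [sub_eq_zero] at h; exact h.symm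
      · intro h; apply h0; exact sub_eq_self.mp h
      · rw [sub_sub_cancel]
        rcases lt_or_eq_of_le (not_lt.mp hord) with h | h
        · exact h
        · exact absurd (ord_inj h) (ne_sub hr e).symm
    · intro e he
      rw [mem_reps] at he
      obtain ⟨h0, hrne, hord⟩ := he
      simp only [Finset.mem_filter, Finset.mem_univ, true_and]
      refine ⟨⟨?_, ?_⟩, ?_⟩
      · intro h; apply hrne; rw [sub_eq_zero] at h; exact h.symm
      · intro h; apply h0; exact sub_eq_self.mp h
      · rw [sub_sub_cancel]; exact not_lt.mpr hord.le
    · intro e _; exact sub_sub_cancel r e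
    · intro e _; exact sub_sub_cancel r e
    · intro e _; rw [sub_sub_cancel, min_comm]
  rw [h1, h2, two_mul]

lemma card_finsum {α β : Type*} [DecidableEq α] (s : Finset α) (f : α → Multiset β) :
    Multiset.card (∑ e ∈ s, f e) = ∑ e ∈ s, Multiset.card (f e) := by
  induction s using Finset.cons_induction with
  | empty => simp
  | cons a t h ih => simp [Finset.sum_cons, ih]

lemma classify {r : Fin k → ZMod 2} (hr : r ≠ 0) (S : Multiset (Fin k → ZMod 2))
    (h2 : Multiset.card S ≤ 2) (h0 : (0 : Fin k → ZMod 2) ∉ S) (hs : S.sum = r) :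
    S = {r} ∨ ∃ e, e ≠ 0 ∧ e ≠ r ∧ S = {e, r - e} := by
  interval_cases h : Multiset.card S
  · rw [Multiset.card_eq_zero] at h; subst h; simp at hs; exact absurd hs.symm hr
  · rw [Multiset.card_eq_one] at h; obtain ⟨a, rfl⟩ := h
    simp at hs; subst hs; left; rfl
  · rw [Multiset.card_eq_two] at h; obtain ⟨a, b, rfl⟩ := h
    right
    have ha : a ≠ 0 := fun h => h0 (by simp [h])
    have hb : b ≠ 0 := fun h => h0 (by simp [h])
    have hsum : a + b = r := by simpa using hs
    have hbr : b = r - a := by rw [← hsum]; abel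
    refine ⟨a, ha, ?_, by rw [hbr]⟩
    intro h; subst h
    apply hb; rw [hbr]; abel

lemma mem_of_T {r : Fin k → ZMod 2} (G : Multiset (Fin k → ZMod 2))
    (T : Multiset (Multiset (Fin k → ZMod 2)))
    (hle : T.sum ≤ G)
    (hT : ∀ A ∈ T, Multiset.card A ≤ 2 ∧ (0 : Fin k → ZMod 2) ∉ A ∧ A.sum = r) :
    ∃ S : Fin (Multiset.card T) → Multiset (Fin k → ZMod 2),
      (∑ i, S i) ≤ G ∧
      ∀ i, Multiset.card (S i) ≤ 2 ∧ (0 : Fin k → ZMod 2) ∉ S i ∧ (S i).sum = r := by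
  have hlen : T.toList.length = Multiset.card T := Multiset.length_toList T
  refine ⟨fun i => T.toList.get (Fin.cast hlen.symm i), ?_, ?_⟩
  · have : (∑ i : Fin (Multiset.card T), T.toList.get (Fin.cast hlen.symm i)) = T.sum := by
      rw [show (∑ i : Fin (Multiset.card T), T.toList.get (Fin.cast hlen.symm i))
          = ∑ j : Fin T.toList.length, T.toList.get j from
        Equiv.sum_comp (finCongr hlen.symm) T.toList.get]
      rw [← List.sum_ofFn (f := T.toList.get), List.ofFn_get, Multiset.sum_toList]
    rw [this]; exact hle
  · intro i
    exact hT _ (Multiset.mem_toList.mp (T.toList.get_mem _))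

lemma U_le {r : Fin k → ZMod 2} (hr : r ≠ 0) (G : Multiset (Fin k → ZMod 2)) :
    (replicate (G.count r) r + ∑ e ∈ reps r,
      (replicate (min (G.count e) (G.count (r - e))) e +
       replicate (min (G.count e) (G.count (r - e))) (r - e))) ≤ G := by
  classical
  rw [le_iff_count]
  intro a
  rw [count_add, count_sum']
  set m : (Fin k → ZMod 2) → ℕ := fun e => min (G.count e) (G.count (r - e)) with hm
  have step : ∀ e ∈ reps r, count a (replicate (m e) e + replicate (m e) (r - e))
      = (if e = a then m e else 0) + (if r - e = a then m e else 0) := by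
    intro e _; rw [count_add, count_replicate, count_replicate]
  rw [Finset.sum_congr rfl step, Finset.sum_add_distrib]
  have e2 : ∀ e ∈ reps r, (if r - e = a then m e else 0)
      = (if e = r - a then m (r - a) else 0) := by
    intro e _
    by_cases h : r - e = a
    · have he' : e = r - a := by rw [← h, sub_sub_cancel]
      rw [if_pos h, if_pos he', he']
    · rw [if_neg h, if_neg (fun h' => h (by rw [h', sub_sub_cancel]))]
  rw [Finset.sum_congr rfl e2, Finset.sum_ite_eq', Finset.sum_ite_eq', count_replicate]
  by_cases har : a = r
  · subst har
    rw [if_pos rfl, if_neg (fun h => (mem_reps.mp h).2.1 rfl),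
      if_neg (fun h => (mem_reps.mp h).1 (by rw [← sub_self a]))]
    simp
  · rw [if_neg (fun h => har h.symm)]
    by_cases hA : a ∈ reps r
    · rw [if_pos hA, if_neg ?_]
      · simpa [hm] using min_le_left (count a G) (count (r - a) G)
      · intro h
        have h1 := (mem_reps.mp hA).2.2
        have h2 := (mem_reps.mp h).2.2
        rw [sub_sub_cancel] at h2
        exact absurd h2 (not_lt.mpr h1.le)
    · rw [if_neg hA]
      by_cases hB : r - a ∈ reps r
      · rw [if_pos hB]
        have : m (r - a) ≤ count a G := by
          rw [hm]; simpa [sub_sub_cancel] using min_le_right (count (r-a) G) (count (r-(r-a)) G)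
        simpa using this
      · rw [if_neg hB]; simp

end MaxRecoveryAux

open MaxRecoveryAux Multiset

/-- for nonzero `r` and a multiset `G` of vectors of `F_2^k`,
the maximum number of pairwise disjoint recovery sets for `r` of size at most 2
(made of nonzero columns of `G`) equals
`N_G(r) + (1/2)·∑_{e ≠ 0, r} min(N_G(e), N_G(r − e))`. -/
theorem max_disjoint_small_recovery_sets (k : ℕ) (r : Fin k → ZMod 2) (hr : r ≠ 0)
    (G : Multiset (Fin k → ZMod 2)) :
    IsGreatest
      {t : ℕ | ∃ S : Fin t → Multiset (Fin k → ZMod 2),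
        (∑ i, S i) ≤ G ∧
        ∀ i, Multiset.card (S i) ≤ 2 ∧ (0 : Fin k → ZMod 2) ∉ S i ∧ (S i).sum = r}
      (G.count r +
        (∑ e ∈ Finset.univ.filter (fun e : Fin k → ZMod 2 => e ≠ 0 ∧ e ≠ r),
          min (G.count e) (G.count (r - e))) / 2) := by
  classical
  set m : (Fin k → ZMod 2) → ℕ := fun e => min (G.count e) (G.count (r - e)) with hm
  have hhalf : (∑ e ∈ Finset.univ.filter (fun e : Fin k → ZMod 2 => e ≠ 0 ∧ e ≠ r),
      min (G.count e) (G.count (r - e))) / 2 = ∑ e ∈ reps r, m e := by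
    rw [half_sum hr (fun e => G.count e)]
    exact Nat.mul_div_cancel_left _ two_pos
  rw [hhalf]
  constructor
  · -- membership: construct the family
    set T : Multiset (Multiset (Fin k → ZMod 2)) :=
      replicate (G.count r) ({r} : Multiset (Fin k → ZMod 2)) +
        ∑ e ∈ reps r, replicate (m e) ({e, r - e} : Multiset (Fin k → ZMod 2)) with hT
    have hcard : Multiset.card T = G.count r + ∑ e ∈ reps r, m e := by
      rw [hT, Multiset.card_add, card_replicate, card_finsum]
      congr 1
      exact Finset.sum_congr rfl (fun e _ => card_replicate _ _)
    have hsum : T.sum = replicate (G.count r) r + ∑ e ∈ reps r,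
        (replicate (m e) e + replicate (m e) (r - e)) := by
      have hms : (∑ e ∈ reps r, replicate (m e) ({e, r - e} : Multiset (Fin k → ZMod 2))).sum
          = ∑ e ∈ reps r, (replicate (m e) ({e, r - e} : Multiset (Fin k → ZMod 2))).sum :=
        map_sum Multiset.sumAddMonoidHom _ _
      rw [hT, Multiset.sum_add, sum_replicate, nsmul_singleton, hms]
      congr 1
      refine Finset.sum_congr rfl (fun e _ => ?_)
      rw [sum_replicate, show ({e, r - e} : Multiset (Fin k → ZMod 2)) = {e} + {r - e} from rfl,
        smul_add, nsmul_singleton, nsmul_singleton]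
    have hTle : T.sum ≤ G := by rw [hsum]; exact U_le hr G
    have hprop : ∀ A ∈ T, Multiset.card A ≤ 2 ∧ (0 : Fin k → ZMod 2) ∉ A ∧ A.sum = r := by
      intro A hA
      rw [hT, Multiset.mem_add] at hA
      rcases hA with hA | hA
      · rw [eq_of_mem_replicate hA]
        exact ⟨by simp, by simpa using Ne.symm hr, by simp⟩
      · rw [Multiset.mem_sum] at hA
        obtain ⟨e, he, hA⟩ := hA
        rw [mem_reps] at he
        rw [eq_of_mem_replicate hA]
        refine ⟨by simp, ?_, ?_⟩
        · intro h
          simp only [Multiset.mem_cons, Multiset.mem_singleton, Multiset.insert_eq_cons] at h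
          rcases h with h | h
          · exact he.1 h.symm
          · exact he.2.1 (sub_eq_zero.mp h.symm).symm
        · show ({e, r - e} : Multiset (Fin k → ZMod 2)).sum = r
          rw [show ({e, r - e} : Multiset (Fin k → ZMod 2)) = e ::ₘ {r - e} from rfl,
            Multiset.sum_cons, Multiset.sum_singleton]
          abel
    have hmem := mem_of_T G T hTle hprop
    rw [hcard] at hmem
    exact hmem
  · -- upper bound
    rintro t ⟨S, hle, hS⟩
    have hclass : ∀ i, ∃ v, (v = r ∧ S i = {r}) ∨
        (v ∈ reps r ∧ S i = {v, r - v}) := by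
      intro i
      rcases classify hr (S i) (hS i).1 (hS i).2.1 (hS i).2.2 with h | ⟨e, he0, her, hse⟩
      · exact ⟨r, Or.inl ⟨rfl, h⟩⟩
      · rcases lt_trichotomy (ord k e) (ord k (r - e)) with h | h | h
        · exact ⟨e, Or.inr ⟨mem_reps.mpr ⟨he0, her, h⟩, hse⟩⟩
        · exact absurd (ord_inj h) (ne_sub hr e)
        · refine ⟨r - e, Or.inr ⟨mem_reps.mpr ⟨?_, ?_, ?_⟩, ?_⟩⟩
          · exact fun hh => her (sub_eq_zero.mp hh).symm
          · exact fun hh => he0 (sub_eq_self.mp hh)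
          · rw [sub_sub_cancel]; exact h
          · rw [hse, sub_sub_cancel, Multiset.pair_comm]
    choose g hg using hclass
    have hg_mem : ∀ i, g i ∈ insert r (reps r) := by
      intro i
      rcases hg i with ⟨h, _⟩ | ⟨h, _⟩
      · rw [h]; exact Finset.mem_insert_self _ _
      · exact Finset.mem_insert_of_mem h
    have key : ∀ v w : Fin k → ZMod 2, (∀ i, g i = v → w ∈ S i) →
        (Finset.univ.filter (fun i => g i = v)).card ≤ count w G := by
      intro v w hv
      calc (Finset.univ.filter (fun i => g i = v)).card
          = ∑ i ∈ Finset.univ.filter (fun i => g i = v), 1 := by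
            rw [Finset.card_eq_sum_ones]
        _ ≤ ∑ i ∈ Finset.univ.filter (fun i => g i = v), count w (S i) :=
            Finset.sum_le_sum (fun i hi =>
              Multiset.one_le_count_iff_mem.mpr (hv i (Finset.mem_filter.mp hi).2))
        _ ≤ ∑ i ∈ Finset.univ, count w (S i) :=
            Finset.sum_le_sum_of_subset (Finset.filter_subset _ _)
        _ = count w (∑ i, S i) := count_sum'.symm
        _ ≤ count w G := count_le_of_le w hle
    have hsplit : t = (Finset.univ.filter (fun i => g i = r)).card +
        ∑ e ∈ reps r, (Finset.univ.filter (fun i => g i = e)).card := by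
      have hcf := Finset.card_eq_sum_card_fiberwise (fun x (_ : x ∈ Finset.univ) => hg_mem x)
      rw [Finset.card_univ, Fintype.card_fin] at hcf
      rw [Finset.sum_insert (fun h => (mem_reps.mp h).2.1 rfl)] at hcf
      exact hcf
    rw [hsplit]
    apply add_le_add
    · apply key r r
      intro i hi
      rcases hg i with ⟨_, h⟩ | ⟨h, _⟩
      · rw [h]; exact Multiset.mem_singleton_self _
      · rw [hi] at h; exact absurd rfl (mem_reps.mp h).2.1
    · apply Finset.sum_le_sum
      intro e he
      have hpair : ∀ i, g i = e → S i = {e, r - e} := by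
        intro i hi
        rcases hg i with ⟨h, _⟩ | ⟨_, h⟩
        · rw [hi] at h; exact absurd h (mem_reps.mp he).2.1
        · rw [← hi]; exact h
      apply le_min
      · apply key e e
        intro i hi
        rw [hpair i hi]
        exact Multiset.mem_cons_self _ _
      · apply key e (r - e)
        intro i hi
        rw [hpair i hi]
        simp
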